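/- Let k ≥ 1 and 1 < γ₁ ≤ γ₂ < ∞. There exists a constant c = c(k, γ₁, γ₂) ≥ 1 such that for every p ∈ [γ₁, γ₂] and all z, η ∈ ℝ^k one has c^{-1} |z − η| (1 + |z|² + |η|²)^{(p−2)/4} ≤ |V_p(z) − V_p(η)| ≤ c |z − η| (1 + |z|² + |η|²)^{(p−2)/4}. -/

import Mathlib

set_option maxHeartbeats 1000000

noncomputable def Vp (p : ℝ) {E : Type*} [NormedAddCommGroup E] [NormedSpace ℝ E] (z : E) : E :=
  ((1 + ‖z‖ ^ 2) ^ ((p - 2) / 4)) • z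

open Real
open scoped RealInnerProductSpace

noncomputable def gfun (s x : ℝ) : ℝ := x * (1 + x^2) ^ s

lemma gfun_hasDerivAt (s x : ℝ) :
    HasDerivAt (gfun s) ((1+x^2)^s + x * ((1+x^2)^(s-1) * (s * (x * 2)))) x := by
  have hb : (0:ℝ) < 1 + x^2 := by positivity
  have h1 : HasDerivAt (fun x : ℝ => 1 + x^2) (2*x) x := by
    simpa using ((hasDerivAt_pow 2 x).const_add 1)
  have h2 : HasDerivAt (fun x : ℝ => (1+x^2)^s) ((1+x^2)^(s-1) * (s * (x * 2))) x := by
    have := h1.rpow_const (p := s) (Or.inl hb.ne')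
    convert this using 1
    ring
  simpa using (show HasDerivAt (gfun s) _ x from (hasDerivAt_id' x).fun_mul h2)

lemma gfun_sub_ge {s a b : ℝ} (hs : s ≤ 0) (h2s : 0 < 1 + 2*s)
    (ha : 0 ≤ a) (hab : a ≤ b) :
    (1+2*s) * ((b-a) * (1+b^2)^s) ≤ gfun s b - gfun s a := by
  rcases eq_or_lt_of_le hab with rfl | hab'
  · simp
  obtain ⟨ξ, hξ, hslope⟩ := exists_hasDerivAt_eq_slope (gfun s)
      (fun x => (1+x^2)^s + x * ((1+x^2)^(s-1) * (s * (x * 2)))) hab'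
      (fun x _ => (gfun_hasDerivAt s x).continuousAt.continuousWithinAt)
      (fun x _ => gfun_hasDerivAt s x)
  have hξ0 : 0 ≤ ξ := le_trans ha hξ.1.le
  have hξb : ξ ≤ b := hξ.2.le
  have hbp : (0:ℝ) < 1 + ξ^2 := by positivity
  -- (1+ξ²)^s = (1+ξ²)^(s-1) * (1+ξ²)
  have hsplit : (1+ξ^2)^s = (1+ξ^2)^(s-1) * (1+ξ^2) := by
    rw [← Real.rpow_add_one hbp.ne']
    ring_nf
  have hE : (0:ℝ) ≤ (1+ξ^2)^(s-1) := Real.rpow_nonneg (by positivity) _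
  have hmono : (1+b^2)^s ≤ (1+ξ^2)^s := by
    apply Real.rpow_le_rpow_of_nonpos hbp _ hs
    nlinarith
  -- deriv lower bound
  have hderiv : (1+2*s) * (1+b^2)^s ≤
      (1+ξ^2)^s + ξ * ((1+ξ^2)^(s-1) * (s * (ξ * 2))) := by
    nlinarith [sq_nonneg ξ, mul_nonneg hE (sq_nonneg ξ)]
  have hba : (0:ℝ) < b - a := by linarith
  have heq : gfun s b - gfun s a
      = ((1+ξ^2)^s + ξ * ((1+ξ^2)^(s-1) * (s * (ξ * 2)))) * (b - a) := by
    rw [hslope]; field_simp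
  rw [heq]
  calc (1+2*s) * ((b-a) * (1+b^2)^s)
      ≤ ((1+ξ^2)^s + ξ * ((1+ξ^2)^(s-1) * (s * (ξ * 2)))) * (b-a) := by
        nlinarith [hderiv, hba.le]
    _ = _ := rfl

-- s ≤ 0 : (1+b²)^s ≤ 2 (1+a²+b²)^s   (using s > -1/4 ⇒ 2^(-s) ≤ 2)
lemma aux_neg_up {s a b : ℝ} (hs : s ≤ 0) (hs4 : -(1/4:ℝ) < s) (hab : a ≤ b) (ha : 0 ≤ a) :
    (1+b^2)^s ≤ 2 * (1+a^2+b^2)^s := by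
  have h1 : (0:ℝ) < (1+a^2+b^2)/2 := by positivity
  have h2 : (1+a^2+b^2)/2 ≤ 1+b^2 := by nlinarith
  have h3 : (1+b^2)^s ≤ ((1+a^2+b^2)/2)^s := Real.rpow_le_rpow_of_nonpos h1 h2 hs
  have h4 : ((1+a^2+b^2)/2)^s = (1+a^2+b^2)^s / 2^s := by
    rw [Real.div_rpow (by positivity) (by norm_num)]
  have h5 : (1/2:ℝ) ≤ 2^s := by
    calc (1/2:ℝ) = 2^(-1:ℝ) := by rw [Real.rpow_neg_one]; norm_num
    _ ≤ 2^s := Real.rpow_le_rpow_of_exponent_le one_le_two (by linarith)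
  have h6 : (1+a^2+b^2)^s / 2^s ≤ 2 * (1+a^2+b^2)^s := by
    rw [div_le_iff₀ (by positivity)]
    have : (0:ℝ) ≤ (1+a^2+b^2)^s := Real.rpow_nonneg (by positivity) _
    nlinarith
  linarith

lemma aux_neg_down {s a b : ℝ} (hs : s ≤ 0) (ha : 0 ≤ a) :
    (1+a^2+b^2)^s ≤ (1+b^2)^s :=
  Real.rpow_le_rpow_of_nonpos (by positivity) (by nlinarith [sq_nonneg a]) hs

lemma aux_pos_up {s a b : ℝ} (hs : 0 ≤ s) :
    (1+b^2)^s ≤ (1+a^2+b^2)^s :=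
  Real.rpow_le_rpow (by positivity) (by nlinarith [sq_nonneg a]) hs

-- 0 ≤ s : (1+a²+b²)^s ≤ 2^s (1+b²)^s   when a ≤ b
lemma aux_pos_down {s a b : ℝ} (hs : 0 ≤ s) (hab : a ≤ b) (ha : 0 ≤ a) :
    (1+a^2+b^2)^s ≤ 2^s * (1+b^2)^s := by
  have h2 : (1+a^2+b^2) ≤ 2*(1+b^2) := by nlinarith
  calc (1+a^2+b^2)^s ≤ (2*(1+b^2))^s :=
        Real.rpow_le_rpow (by positivity) h2 hs
    _ = 2^s * (1+b^2)^s := Real.mul_rpow (by norm_num) (by positivity)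

-- Bernoulli-style: 1 - r^s ≤ max(1,s)(1-r) for 0 < r ≤ 1, 0 ≤ s ; with γ ≥ max(1,s)
lemma aux_bern {s r γ : ℝ} (hs : 0 ≤ s) (hr0 : 0 < r) (hr1 : r ≤ 1)
    (hγ1 : 1 ≤ γ) (hγs : s ≤ γ) : 1 - r^s ≤ γ * (1 - r) := by
  rcases le_or_gt s 1 with h1 | h1
  · have : r^(1:ℝ) ≤ r^s := Real.rpow_le_rpow_of_exponent_ge hr0 hr1 h1
    rw [Real.rpow_one] at this
    nlinarith
  · have hber : 1 + s * (r - 1) ≤ (1 + (r-1))^s :=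
      one_add_mul_self_le_rpow_one_add (by linarith) h1.le
    have : (1 + (r-1)) = r := by ring
    rw [this] at hber
    nlinarith

lemma L_A_upper {s γ₂ a b : ℝ} (hs4 : -(1/4:ℝ) < s) (hsγ : s ≤ γ₂) (hγ : 1 < γ₂)
    (ha : 0 ≤ a) (hab : a ≤ b) :
    b * (1+b^2)^s - a * (1+a^2)^s ≤ (2*γ₂+3) * ((b-a) * (1+a^2+b^2)^s) := by
  have hw : (0:ℝ) ≤ (1+a^2+b^2)^s := Real.rpow_nonneg (by positivity) _
  have hB : (0:ℝ) ≤ (1+b^2)^s := Real.rpow_nonneg (by positivity) _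
  rcases le_or_gt s 0 with hs | hs
  · -- negative exponent case
    have hAB : (1+b^2)^s ≤ (1+a^2)^s :=
      Real.rpow_le_rpow_of_nonpos (by positivity) (by nlinarith) hs
    have h2 : (1+b^2)^s ≤ 2 * (1+a^2+b^2)^s := aux_neg_up hs hs4 hab ha
    nlinarith [mul_nonneg (mul_nonneg (by linarith : (0:ℝ) ≤ 2*γ₂+1) (by linarith : (0:ℝ) ≤ b - a)) hw]
  · -- positive exponent case
    set A := (1+a^2)^s with hA
    set B := (1+b^2)^s with hBdef
    have hbpos : (0:ℝ) < 1+b^2 := by positivity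
    have hr0 : (0:ℝ) < (1+a^2)/(1+b^2) := by positivity
    have hr1 : (1+a^2)/(1+b^2) ≤ 1 := by
      rw [div_le_one hbpos]; nlinarith
    have hrs : ((1+a^2)/(1+b^2))^s = A / B := by
      rw [Real.div_rpow (by positivity) hbpos.le]
    have hbern : 1 - A/B ≤ γ₂ * (1 - (1+a^2)/(1+b^2)) := by
      rw [← hrs]; exact aux_bern hs.le hr0 hr1 hγ.le (by linarith)
    have hBpos : (0:ℝ) < B := Real.rpow_pos_of_pos hbpos _
    -- multiply out: (1+b²)(B - A) ≤ γ₂ (b²-a²) B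
    have hkey : (1+b^2) * (B - A) ≤ γ₂ * ((b^2-a^2) * B) := by
      have h1 := mul_le_mul_of_nonneg_left hbern (le_of_lt (mul_pos hBpos hbpos))
      have e1 : B * (1+b^2) * (1 - A/B) = (1+b^2) * (B - A) := by
        field_simp
      have e2 : B * (1+b^2) * (γ₂ * (1 - (1+a^2)/(1+b^2))) = γ₂ * ((b^2-a^2) * B) := by
        field_simp; ring
      rw [e1, e2] at h1; exact h1
    have hBw : B ≤ (1+a^2+b^2)^s := aux_pos_up hs.le
    -- conclude
    have haa : a * (a+b) ≤ 2*(1+b^2) := by nlinarith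
    have h5 : a*((1+b^2)*(B-A)) ≤ a*(γ₂*((b^2-a^2)*B)) :=
      mul_le_mul_of_nonneg_left hkey ha
    have h7 : a*(b^2-a^2) ≤ (b-a)*(2*(1+b^2)) := by nlinarith
    have h8 : γ₂*B*(a*(b^2-a^2)) ≤ γ₂*B*((b-a)*(2*(1+b^2))) :=
      mul_le_mul_of_nonneg_left h7 (mul_nonneg (by linarith) hBpos.le)
    have h9' : (b*B - a*A)*(1+b^2) ≤ ((1+2*γ₂)*((b-a)*B))*(1+b^2) := by nlinarith [h5, h8]
    have h9 := le_of_mul_le_mul_right h9' hbpos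
    have h10 : (b-a)*B ≤ (b-a)*(1+a^2+b^2)^s :=
      mul_le_mul_of_nonneg_left hBw (by linarith)
    nlinarith [h9, h10, mul_nonneg (by linarith : (0:ℝ) ≤ b-a) hw]

lemma aux_K {s γ₂ : ℝ} (hsγ : s ≤ γ₂) (hγ : 1 < γ₂) :
    2^s * 2 ≤ (2:ℝ)^(γ₂+2) ∧ (2:ℝ) ≤ (2:ℝ)^(γ₂+2) ∧ (1:ℝ) ≤ (2:ℝ)^(γ₂+2) := by
  have h1 : (2:ℝ)^s * 2 = 2^(s+1) := by
    rw [Real.rpow_add (by norm_num), Real.rpow_one]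
  have h2 : (2:ℝ)^(s+1) ≤ 2^(γ₂+2) :=
    Real.rpow_le_rpow_of_exponent_le one_le_two (by linarith)
  have h3 : (2:ℝ) = 2^(1:ℝ) := (Real.rpow_one 2).symm
  have h4 : (2:ℝ)^(1:ℝ) ≤ 2^(γ₂+2) :=
    Real.rpow_le_rpow_of_exponent_le one_le_two (by linarith)
  have h5 : (1:ℝ) = (2:ℝ)^(0:ℝ) := (Real.rpow_zero 2).symm
  have h6 : (2:ℝ)^(0:ℝ) ≤ 2^(γ₂+2) :=
    Real.rpow_le_rpow_of_exponent_le one_le_two (by linarith)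
  refine ⟨by linarith, ?_, ?_⟩
  · calc (2:ℝ) = 2^(1:ℝ) := h3
      _ ≤ 2^(γ₂+2) := h4
  · calc (1:ℝ) = (2:ℝ)^(0:ℝ) := h5
      _ ≤ 2^(γ₂+2) := h6

lemma L_A_lower {s γ₂ a b : ℝ} (hs4 : -(1/4:ℝ) < s) (hsγ : s ≤ γ₂) (hγ : 1 < γ₂)
    (ha : 0 ≤ a) (hab : a ≤ b) :
    (b-a) * (1+a^2+b^2)^s ≤ (2:ℝ)^(γ₂+2) * (b * (1+b^2)^s - a * (1+a^2)^s) := by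
  obtain ⟨hK1, hK2, hK3⟩ := aux_K hsγ hγ
  have hKpos : (0:ℝ) < (2:ℝ)^(γ₂+2) := Real.rpow_pos_of_pos (by norm_num) _
  have hB : (0:ℝ) ≤ (1+b^2)^s := Real.rpow_nonneg (by positivity) _
  rcases le_or_gt s 0 with hs | hs
  · -- MVT lower bound
    have h2s : (0:ℝ) < 1 + 2*s := by linarith
    have hmvt := gfun_sub_ge hs h2s ha hab
    simp only [gfun] at hmvt
    have hwB : (1+a^2+b^2)^s ≤ (1+b^2)^s := aux_neg_down hs ha
    have hdiff : 0 ≤ b * (1+b^2)^s - a * (1+a^2)^s := by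
      nlinarith [mul_nonneg (mul_nonneg h2s.le (by linarith : (0:ℝ) ≤ b-a)) hB]
    -- (b-a) w ≤ (b-a)(1+b²)^s ≤ 2 (gb - ga) ≤ K (gb - ga)
    have h1 : (b-a) * (1+a^2+b^2)^s ≤ (b-a) * (1+b^2)^s :=
      mul_le_mul_of_nonneg_left hwB (by linarith)
    have h2 : (1+2*s) * ((b-a) * (1+b^2)^s) ≥ (1/2) * ((b-a)*(1+b^2)^s) := by
      nlinarith [mul_nonneg (by linarith : (0:ℝ) ≤ b-a) hB]
    nlinarith [mul_le_mul_of_nonneg_right hK2 hdiff]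
  · -- algebraic case, s > 0
    set A := (1+a^2)^s
    set B := (1+b^2)^s
    have hApos : (0:ℝ) < A := Real.rpow_pos_of_pos (by positivity) _
    have hAB : A ≤ B := Real.rpow_le_rpow (by positivity) (by nlinarith) hs.le
    have hclaim : (b-a)*B/2 ≤ b*B - a*A := by
      rcases le_or_gt B (2*A) with hr | hr
      · -- A ≥ B/2 : b*B - a*A ≥ b*A - a*A = (b-a)*A ≥ (b-a)*B/2
        have h1 : (b-a)*A ≤ b*B - a*A := by nlinarith
        nlinarith [mul_nonneg (by linarith : (0:ℝ) ≤ b-a) hApos.le]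
      · -- A < B/2 : b*B - a*A ≥ b*B - a*B/2 ≥ b*B/2 ≥ (b-a)*B/2
        nlinarith [mul_nonneg ha hApos.le, mul_nonneg (by linarith : (0:ℝ) ≤ b) hB]
    have hdiff : 0 ≤ b*B - a*A := by
      nlinarith [mul_nonneg (by linarith : (0:ℝ) ≤ b-a) hB]
    have hw2 : (1+a^2+b^2)^s ≤ 2^s * B := aux_pos_down hs.le hab ha
    have h3 : (b-a) * (1+a^2+b^2)^s ≤ (b-a) * (2^s * B) :=
      mul_le_mul_of_nonneg_left hw2 (by linarith)
    have h2spos : (0:ℝ) < 2^s := Real.rpow_pos_of_pos (by norm_num) _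
    -- (b-a) 2^s B ≤ 2^s * 2 * (bB - aA) ≤ K (bB - aA)
    nlinarith [mul_le_mul_of_nonneg_left hclaim (by positivity : (0:ℝ) ≤ 2^s * 2),
      mul_le_mul_of_nonneg_right hK1 hdiff]

lemma L_B_upper {s γ₂ a b : ℝ} (hs4 : -(1/4:ℝ) < s) (hsγ : s ≤ γ₂) (hγ : 1 < γ₂)
    (ha : 0 ≤ a) (hab : a ≤ b) :
    a * (1+a^2)^s + b * (1+b^2)^s ≤ 4 * ((a+b) * (1+a^2+b^2)^s) := by
  have hw : (0:ℝ) ≤ (1+a^2+b^2)^s := Real.rpow_nonneg (by positivity) _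
  have hB : (0:ℝ) ≤ (1+b^2)^s := Real.rpow_nonneg (by positivity) _
  rcases le_or_gt s 0 with hs | hs
  · have h2s : (0:ℝ) < 1 + 2*s := by linarith
    have hmvt := gfun_sub_ge hs h2s ha hab
    simp only [gfun] at hmvt
    have hmono : a * (1+a^2)^s ≤ b * (1+b^2)^s := by
      nlinarith [mul_nonneg (mul_nonneg h2s.le (by linarith : (0:ℝ) ≤ b-a)) hB]
    have h2 : (1+b^2)^s ≤ 2 * (1+a^2+b^2)^s := aux_neg_up hs hs4 hab ha
    nlinarith [mul_le_mul_of_nonneg_left h2 (by linarith : (0:ℝ) ≤ b), mul_nonneg ha hw]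
  · have hA : (1+a^2)^s ≤ (1+a^2+b^2)^s :=
      Real.rpow_le_rpow (by positivity) (by nlinarith [sq_nonneg b]) hs.le
    have hBw : (1+b^2)^s ≤ (1+a^2+b^2)^s := aux_pos_up hs.le
    nlinarith [mul_le_mul_of_nonneg_left hA ha, mul_le_mul_of_nonneg_left hBw (by linarith : (0:ℝ) ≤ b),
      mul_nonneg (by linarith : (0:ℝ) ≤ a+b) hw]

lemma L_B_lower {s γ₂ a b : ℝ} (hs4 : -(1/4:ℝ) < s) (hsγ : s ≤ γ₂) (hγ : 1 < γ₂)
    (ha : 0 ≤ a) (hab : a ≤ b) :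
    (a+b) * (1+a^2+b^2)^s ≤ (2:ℝ)^(γ₂+2) * (a * (1+a^2)^s + b * (1+b^2)^s) := by
  obtain ⟨hK1, hK2, hK3⟩ := aux_K hsγ hγ
  have hA : (0:ℝ) ≤ (1+a^2)^s := Real.rpow_nonneg (by positivity) _
  have hB : (0:ℝ) ≤ (1+b^2)^s := Real.rpow_nonneg (by positivity) _
  have hsum : 0 ≤ a * (1+a^2)^s + b * (1+b^2)^s := by
    have := mul_nonneg ha hA; have := mul_nonneg (le_trans ha hab) hB; linarith
  rcases le_or_gt s 0 with hs | hs
  · have hwB : (1+a^2+b^2)^s ≤ (1+b^2)^s := aux_neg_down hs ha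
    have h1 : (a+b) * (1+a^2+b^2)^s ≤ (a+b) * (1+b^2)^s :=
      mul_le_mul_of_nonneg_left hwB (by linarith)
    have h2 : (a+b) * (1+b^2)^s ≤ 2 * (b * (1+b^2)^s) := by
      nlinarith [mul_le_mul_of_nonneg_right hab hB]
    nlinarith [mul_le_mul_of_nonneg_right hK2 hsum, mul_nonneg ha hA,
      mul_le_mul_of_nonneg_left (mul_nonneg ha hA) (by linarith : (0:ℝ) ≤ (2:ℝ))]
  · have hw2 : (1+a^2+b^2)^s ≤ 2^s * (1+b^2)^s := aux_pos_down hs.le hab ha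
    have h1 : (a+b) * (1+a^2+b^2)^s ≤ (a+b) * (2^s * (1+b^2)^s) :=
      mul_le_mul_of_nonneg_left hw2 (by linarith)
    have h2spos : (0:ℝ) < 2^s := Real.rpow_pos_of_pos (by norm_num) _
    have h2 : (a+b) * (2^s * (1+b^2)^s) ≤ 2^s * 2 * (b * (1+b^2)^s) := by
      nlinarith [mul_le_mul_of_nonneg_right hab hB]
    nlinarith [mul_le_mul_of_nonneg_right hK1 hsum, mul_nonneg ha hA,
      mul_le_mul_of_nonneg_left (mul_nonneg ha hA) (by positivity : (0:ℝ) ≤ 2^s*2)]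

lemma Vp_norm_sq {k : ℕ} (p : ℝ) (z η : EuclideanSpace ℝ (Fin k)) :
    ‖Vp p z - Vp p η‖^2
      = ((1+‖z‖^2)^((p-2)/4))^2*‖z‖^2
        - 2*(((1+‖z‖^2)^((p-2)/4))*((1+‖η‖^2)^((p-2)/4)))*⟪z,η⟫
        + ((1+‖η‖^2)^((p-2)/4))^2*‖η‖^2 := by
  have hA : (0:ℝ) ≤ (1+‖z‖^2)^((p-2)/4) := Real.rpow_nonneg (by positivity) _
  have hB : (0:ℝ) ≤ (1+‖η‖^2)^((p-2)/4) := Real.rpow_nonneg (by positivity) _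
  rw [Vp, Vp, norm_sub_sq_real, norm_smul, norm_smul,
    real_inner_smul_left, real_inner_smul_right]
  rw [Real.norm_eq_abs, Real.norm_eq_abs, abs_of_nonneg hA, abs_of_nonneg hB]
  ring

lemma vec_both {k : ℕ} {γ₂ p c : ℝ} (hγ : 1 < γ₂) (hp1 : 1 < p) (hp2 : p ≤ γ₂)
    (hc34 : 2*γ₂+3 ≤ c) (hc4 : 4 ≤ c) (hcK : (2:ℝ)^(γ₂+2) ≤ c) (hcpos : 0 < c)
    (z η : EuclideanSpace ℝ (Fin k)) (hab : ‖z‖ ≤ ‖η‖) :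
    c⁻¹ * ‖z - η‖ * (1 + ‖z‖ ^ 2 + ‖η‖ ^ 2) ^ ((p - 2) / 4)
        ≤ ‖Vp p z - Vp p η‖ ∧
      ‖Vp p z - Vp p η‖
        ≤ c * ‖z - η‖ * (1 + ‖z‖ ^ 2 + ‖η‖ ^ 2) ^ ((p - 2) / 4) := by
  have hs4 : -(1/4:ℝ) < (p-2)/4 := by linarith
  have hsγ : (p-2)/4 ≤ γ₂ := by linarith
  have ha : 0 ≤ ‖z‖ := norm_nonneg _
  have hb : 0 ≤ ‖η‖ := norm_nonneg _
  have hA0 : (0:ℝ) ≤ (1+‖z‖^2)^((p-2)/4) := Real.rpow_nonneg (by positivity) _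
  have hB0 : (0:ℝ) ≤ (1+‖η‖^2)^((p-2)/4) := Real.rpow_nonneg (by positivity) _
  have hw0 : (0:ℝ) ≤ (1+‖z‖^2+‖η‖^2)^((p-2)/4) := Real.rpow_nonneg (by positivity) _
  have hKpos : (0:ℝ) < (2:ℝ)^(γ₂+2) := Real.rpow_pos_of_pos (by norm_num) _
  have hVsq := Vp_norm_sq p z η
  have hzsq : ‖z - η‖^2 = ‖z‖^2 - 2*⟪z,η⟫ + ‖η‖^2 := norm_sub_sq_real z η
  have habs : |⟪z,η⟫| ≤ ‖z‖*‖η‖ := abs_real_inner_le_norm z η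
  have hAu := L_A_upper hs4 hsγ hγ ha hab
  have hAl := L_A_lower hs4 hsγ hγ ha hab
  have hBu := L_B_upper hs4 hsγ hγ ha hab
  have hBl := L_B_lower hs4 hsγ hγ ha hab
  have hVnn : 0 ≤ ‖Vp p z - Vp p η‖ := norm_nonneg _
  have hznn : 0 ≤ ‖z - η‖ := norm_nonneg _
  set K : ℝ := (2:ℝ)^(γ₂+2) with hKdef
  clear_value K
  set a : ℝ := ‖z‖ with hadef
  set b : ℝ := ‖η‖ with hbdef
  set t : ℝ := ⟪z,η⟫ with htdef
  clear_value t
  set A : ℝ := (1+a^2)^((p-2)/4) with hAdef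
  set B : ℝ := (1+b^2)^((p-2)/4) with hBdef
  set w : ℝ := (1+a^2+b^2)^((p-2)/4) with hwdef
  clear_value A B w
  clear hAdef hBdef hwdef hKdef htdef
  obtain ⟨ht2, ht1⟩ := abs_le.mp habs
  have hd : 0 ≤ b*B - a*A := by
    nlinarith [mul_nonneg (mul_nonneg (sub_nonneg.2 hab) hw0) hKpos.le,
      mul_nonneg (sub_nonneg.2 hab) hw0]
  have hsum0 : 0 ≤ a*A + b*B := by positivity
  have e1 : b*B - a*A ≤ c * ((b-a)*w) := by
    have h : (2*γ₂+3) * ((b-a)*w) ≤ c * ((b-a)*w) :=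
      mul_le_mul_of_nonneg_right hc34 (mul_nonneg (sub_nonneg.2 hab) hw0)
    linarith
  have e2 : a*A + b*B ≤ c * ((a+b)*w) := by
    have h : (4:ℝ) * ((a+b)*w) ≤ c * ((a+b)*w) :=
      mul_le_mul_of_nonneg_right hc4 (mul_nonneg (by linarith) hw0)
    linarith
  have f1 : c⁻¹ * ((b-a)*w) ≤ b*B - a*A := by
    rw [inv_mul_le_iff₀ hcpos]
    calc (b-a)*w ≤ K * (b*B - a*A) := hAl
      _ ≤ c * (b*B - a*A) := mul_le_mul_of_nonneg_right hcK hd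
  have f2 : c⁻¹ * ((a+b)*w) ≤ a*A + b*B := by
    rw [inv_mul_le_iff₀ hcpos]
    calc (a+b)*w ≤ K * (a*A + b*B) := hBl
      _ ≤ c * (a*A + b*B) := mul_le_mul_of_nonneg_right hcK hsum0
  have hci : 0 ≤ c⁻¹ := by positivity
  constructor
  · apply le_of_pow_le_pow_left₀ two_ne_zero hVnn
    have expand : (c⁻¹ * ‖z - η‖ * w)^2 = (c⁻¹)^2 * (a^2 - 2*t + b^2) * w^2 := by
      rw [mul_pow, mul_pow, hzsq]
    rw [expand, hVsq]
    have f1sq := mul_self_le_mul_self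
      (mul_nonneg hci (mul_nonneg (sub_nonneg.2 hab) hw0)) f1
    have f2sq := mul_self_le_mul_self
      (mul_nonneg hci (mul_nonneg (by linarith : (0:ℝ) ≤ a+b) hw0)) f2
    rcases le_or_gt (A*B) ((c⁻¹)^2*w^2) with hα | hα
    · linarith [mul_nonneg (sub_nonneg.2 hα) (by linarith : (0:ℝ) ≤ t + a*b), f2sq]
    · linarith [mul_nonneg (le_of_lt (sub_pos.2 hα)) (sub_nonneg.2 ht1), f1sq]
  · have hY : (0:ℝ) ≤ c * ‖z - η‖ * w := by positivity
    apply le_of_pow_le_pow_left₀ two_ne_zero hY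
    have expand : (c * ‖z - η‖ * w)^2 = c^2 * (a^2 - 2*t + b^2) * w^2 := by
      rw [mul_pow, mul_pow, hzsq]
    rw [expand, hVsq]
    have e1sq := mul_self_le_mul_self hd e1
    have e2sq := mul_self_le_mul_self hsum0 e2
    rcases le_or_gt (A*B) (c^2*w^2) with hα | hα
    · linarith [mul_nonneg (sub_nonneg.2 hα) (sub_nonneg.2 ht1), e1sq]
    · linarith [mul_nonneg (le_of_lt (sub_pos.2 hα)) (by linarith : (0:ℝ) ≤ t + a*b), e2sq]

theorem stmt_2 (k : ℕ) (hk : 1 ≤ k) (γ₁ γ₂ : ℝ) (hγ₁ : 1 < γ₁) (hγ : γ₁ ≤ γ₂) :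
    ∃ c : ℝ, 1 ≤ c ∧ ∀ p : ℝ, γ₁ ≤ p → p ≤ γ₂ →
      ∀ z η : EuclideanSpace ℝ (Fin k),
        c⁻¹ * ‖z - η‖ * (1 + ‖z‖ ^ 2 + ‖η‖ ^ 2) ^ ((p - 2) / 4) ≤ ‖Vp p z - Vp p η‖ ∧
        ‖Vp p z - Vp p η‖ ≤ c * ‖z - η‖ * (1 + ‖z‖ ^ 2 + ‖η‖ ^ 2) ^ ((p - 2) / 4) := by
  have hγ2 : 1 < γ₂ := lt_of_lt_of_le hγ₁ hγ
  have hKpos : (0:ℝ) < (2:ℝ)^(γ₂+2) := Real.rpow_pos_of_pos (by norm_num) _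
  refine ⟨(2:ℝ)^(γ₂+2) + 2*γ₂ + 4, by linarith, ?_⟩
  intro p hp_low hp_high z η
  have hp1 : 1 < p := lt_of_lt_of_le hγ₁ hp_low
  have hc34 : 2*γ₂+3 ≤ (2:ℝ)^(γ₂+2) + 2*γ₂ + 4 := by linarith
  have hc4 : (4:ℝ) ≤ (2:ℝ)^(γ₂+2) + 2*γ₂ + 4 := by linarith
  have hcK : (2:ℝ)^(γ₂+2) ≤ (2:ℝ)^(γ₂+2) + 2*γ₂ + 4 := by linarith
  have hcpos : (0:ℝ) < (2:ℝ)^(γ₂+2) + 2*γ₂ + 4 := by linarith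
  rcases le_total ‖z‖ ‖η‖ with h | h
  · exact vec_both hγ2 hp1 hp_high hc34 hc4 hcK hcpos z η h
  · obtain ⟨h1, h2⟩ := vec_both hγ2 hp1 hp_high hc34 hc4 hcK hcpos η z h
    have hw : (1 + ‖η‖^2 + ‖z‖^2 : ℝ) = 1 + ‖z‖^2 + ‖η‖^2 := by ring
    rw [norm_sub_rev η z, norm_sub_rev (Vp p η) (Vp p z), hw] at h1 h2
    exact ⟨h1, h2⟩
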